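/- Let T be a continuous linear operator on a locally convex space X and x ∈ X. Then the convex hull of the orbit {Tⁿx : n ≥ 0} is dense in X if and only if for every nonzero continuous linear functional f on X, sup_{n≥0} Re(f(Tⁿx)) = ∞. -/

import Mathlib

open RCLike

/-- Extend a continuous real functional to a continuous `𝕜`-linear functional in the
topological (not necessarily normed) setting. -/
noncomputable def myExtend {𝕜 : Type*} [RCLike 𝕜] {X : Type*} [AddCommGroup X] [Module 𝕜 X]
    [Module ℝ X] [IsScalarTower ℝ 𝕜 X] [TopologicalSpace X] [IsTopologicalAddGroup X]
    [ContinuousSMul 𝕜 X] (g : X →L[ℝ] ℝ) : X →L[𝕜] 𝕜 where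
  toLinearMap := LinearMap.extendTo𝕜' (g : X →ₗ[ℝ] ℝ)
  cont := by
    have h : Continuous fun z : X =>
        ((g z : ℝ) : 𝕜) - (I : 𝕜) * ((g ((I : 𝕜) • z) : ℝ) : 𝕜) := by fun_prop
    have he : (LinearMap.extendTo𝕜' (g : X →ₗ[ℝ] ℝ) : X → 𝕜) =
        fun z => ((g z : ℝ) : 𝕜) - (I : 𝕜) * ((g ((I : 𝕜) • z) : ℝ) : 𝕜) := by
      funext z; exact LinearMap.extendTo𝕜'_apply _ z
    show Continuous (⇑(LinearMap.extendTo𝕜' (g : X →ₗ[ℝ] ℝ) : X →ₗ[𝕜] 𝕜))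
    exact he ▸ h

theorem myExtend_re {𝕜 : Type*} [RCLike 𝕜] {X : Type*} [AddCommGroup X] [Module 𝕜 X]
    [Module ℝ X] [IsScalarTower ℝ 𝕜 X] [TopologicalSpace X] [IsTopologicalAddGroup X]
    [ContinuousSMul 𝕜 X] (g : X →L[ℝ] ℝ) (z : X) : re (myExtend (𝕜 := 𝕜) g z) = g z :=
  LinearMap.extendTo𝕜'_apply_re _ z

/-- **Hahn–Banach characterization of convex-cyclic vectors.**  For a continuous linear
operator `T` on a (real or complex) locally convex space `X` and `x ∈ X`, the convex hull of
the orbit `{Tⁿx : n ≥ 0}` is dense in `X` iff for every nonzero continuous linear functional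
`f` on `X`, `sup_{n ≥ 0} Re (f (Tⁿ x)) = ∞`. -/
theorem convexHull_orbit_dense_iff
    {𝕜 : Type*} [RCLike 𝕜] {X : Type*} [AddCommGroup X] [Module 𝕜 X] [Module ℝ X]
    [IsScalarTower ℝ 𝕜 X] [TopologicalSpace X] [IsTopologicalAddGroup X]
    [ContinuousSMul 𝕜 X] [ContinuousSMul ℝ X] [LocallyConvexSpace ℝ X]
    (T : X →L[𝕜] X) (x : X) :
    Dense (convexHull ℝ (Set.range fun n : ℕ => (T ^ n) x)) ↔
      ∀ f : X →L[𝕜] 𝕜, f ≠ 0 → ∀ M : ℝ, ∃ n : ℕ, M < RCLike.re (f ((T ^ n) x)) := by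
  set C := convexHull ℝ (Set.range fun n : ℕ => (T ^ n) x) with hC
  constructor
  · intro hdense f hf M
    by_contra h
    push_neg at h
    -- g = re ∘ f as a real continuous linear functional
    set g : X →L[ℝ] ℝ := (reCLM : 𝕜 →L[ℝ] ℝ).comp (f.restrictScalars ℝ) with hg
    have hgle : ∀ y ∈ C, g y ≤ M := by
      intro y hy
      have hconv : Convex ℝ {z : X | g z ≤ M} := convex_halfSpace_le g.toLinearMap.isLinear M
      have : C ⊆ {z : X | g z ≤ M} := convexHull_min (by rintro _ ⟨n, rfl⟩; exact h n) hconv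
      exact this hy
    -- pick y with f y ≠ 0, scale so that g is unbounded
    obtain ⟨y, hy⟩ : ∃ y, f y ≠ 0 := by
      by_contra hall; push_neg at hall
      exact hf (ContinuousLinearMap.ext fun z => by simp [hall z])
    have hy1 : g ((f y)⁻¹ • y) = 1 := by
      simp [hg, map_smul, smul_eq_mul, inv_mul_cancel₀ hy]
    set w : X := (f y)⁻¹ • y
    -- closure of C is univ, but g ≤ M on closure of C
    have hcl : ∀ z ∈ closure C, g z ≤ M := by
      intro z hz
      have : closure C ⊆ {z : X | g z ≤ M} :=
        closure_minimal hgle (isClosed_le g.continuous continuous_const)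
      exact this hz
    have : g ((M + 1) • w) ≤ M := hcl _ (by rw [hdense.closure_eq]; trivial)
    rw [map_smul, hy1, smul_eq_mul, mul_one] at this
    linarith
  · intro h
    by_contra hdense
    rw [dense_iff_closure_eq] at hdense
    obtain ⟨y, hy⟩ : ∃ y, y ∉ closure C := by
      by_contra hall; push_neg at hall
      exact hdense (Set.eq_univ_of_forall hall)
    have hconv : Convex ℝ (closure C) := (convex_convexHull ℝ _).closure
    obtain ⟨g, u, hgu, huy⟩ := geometric_hahn_banach_closed_point hconv isClosed_closure hy
    set f : X →L[𝕜] 𝕜 := myExtend g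
    have hfre : ∀ z, re (f z) = g z := myExtend_re g
    have hx0 : (fun n : ℕ => (T ^ n) x) 0 ∈ closure C :=
      subset_closure (subset_convexHull ℝ _ (Set.mem_range_self 0))
    have hf0 : f ≠ 0 := by
      intro hzero
      have h1 : g ((fun n : ℕ => (T ^ n) x) 0) < u := hgu _ hx0
      have h2 : g y = 0 := by rw [← hfre, hzero]; simp
      have h3 : g ((fun n : ℕ => (T ^ n) x) 0) = 0 := by rw [← hfre, hzero]; simp
      rw [h3] at h1; rw [h2] at huy; linarith
    obtain ⟨n, hn⟩ := h f hf0 u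
    rw [hfre] at hn
    have : g ((T ^ n) x) < u :=
      hgu _ (subset_closure (subset_convexHull ℝ _ (Set.mem_range_self n)))
    linarith
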